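/- The equation (Ψc1) holds: for all objects A₁, A₂, B₁, B₂ of C, the composite Ψ_{A₁,A₂;B₁⊗B₂} ∘ (c_{B₁,EA₁} ⊗ 1_{B₂⊗EA₂}) equals the composite (c_{B₁,E(A₁⊗A₂)} ⊗ 1_{B₂}) ∘ (1_{B₁} ⊗ Ψ_{A₁,A₂;B₂}), where on each side the unique structural coherence isomorphisms of C (built from a, l, r and their inverses) are inserted between the displayed factors so that the composites are well-typed morphisms with common source a bracketing of B₁ ⊗ EA₁ ⊗ B₂ ⊗ EA₂ and common target E(A₁⊗A₂) ⊗ (B₁⊗B₂) (in Lean this can be expressed with monoidal coherent composition ⊗≫). -/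

import Mathlib

open CategoryTheory MonoidalCategory

set_option maxHeartbeats 1000000 in
/-- For a linear (symmetric lax monoidal) endofunctor `E` of a symmetric monoidal
category, with `Ψ_{A₁,A₂;B} := (ψ_{A₁,A₂} ⊗ 1_B) ∘ a⁻¹ ∘ (1_{EA₁} ⊗ c_{B,EA₂}) ∘ a`,
the equation (Ψc1) holds (structural coherence isomorphisms inserted via `⊗≫`). -/
theorem Psic1 {C : Type*} [Category C] [MonoidalCategory C] [SymmetricCategory C]
    (E : C ⥤ C)
    (ψ : ∀ A B : C, E.obj A ⊗ E.obj B ⟶ E.obj (A ⊗ B))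
    (ψ₀ : 𝟙_ C ⟶ E.obj (𝟙_ C))
    (ψ_nat : ∀ {A A' B B' : C} (f : A ⟶ A') (g : B ⟶ B'),
      (E.map f ⊗ₘ E.map g) ≫ ψ A' B' = ψ A B ≫ E.map (f ⊗ₘ g))
    (ψa : ∀ A B C' : C,
      (ψ A B ⊗ₘ 𝟙 (E.obj C')) ≫ ψ (A ⊗ B) C' ≫ E.map (α_ A B C').hom
        = (α_ (E.obj A) (E.obj B) (E.obj C')).hom ≫ (𝟙 (E.obj A) ⊗ₘ ψ B C') ≫ ψ A (B ⊗ C'))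
    (ψl : ∀ A : C,
      (ψ₀ ⊗ₘ 𝟙 (E.obj A)) ≫ ψ (𝟙_ C) A ≫ E.map (λ_ A).hom = (λ_ (E.obj A)).hom)
    (ψr : ∀ A : C,
      (𝟙 (E.obj A) ⊗ₘ ψ₀) ≫ ψ A (𝟙_ C) ≫ E.map (ρ_ A).hom = (ρ_ (E.obj A)).hom)
    (ψc : ∀ A B : C,
      ψ A B ≫ E.map (β_ A B).hom = (β_ (E.obj A) (E.obj B)).hom ≫ ψ B A)
    (Ψ : ∀ A₁ A₂ B : C, (E.obj A₁ ⊗ B) ⊗ E.obj A₂ ⟶ E.obj (A₁ ⊗ A₂) ⊗ B)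
    (hΨ : ∀ A₁ A₂ B : C,
      Ψ A₁ A₂ B = (α_ (E.obj A₁) B (E.obj A₂)).hom ≫
        (𝟙 (E.obj A₁) ⊗ₘ (β_ B (E.obj A₂)).hom) ≫
        (α_ (E.obj A₁) (E.obj A₂) B).inv ≫ (ψ A₁ A₂ ⊗ₘ 𝟙 B)) :
    ∀ A₁ A₂ B₁ B₂ : C,
      (𝟙 (B₁ ⊗ (E.obj A₁ ⊗ (B₂ ⊗ E.obj A₂))) ⊗≫
        ((β_ B₁ (E.obj A₁)).hom ⊗ₘ 𝟙 (B₂ ⊗ E.obj A₂)) ⊗≫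
        Ψ A₁ A₂ (B₁ ⊗ B₂) ⊗≫
        𝟙 (E.obj (A₁ ⊗ A₂) ⊗ (B₁ ⊗ B₂)))
      = (𝟙 (B₁ ⊗ (E.obj A₁ ⊗ (B₂ ⊗ E.obj A₂))) ⊗≫
        (𝟙 B₁ ⊗ₘ Ψ A₁ A₂ B₂) ⊗≫
        ((β_ B₁ (E.obj (A₁ ⊗ A₂))).hom ⊗ₘ 𝟙 B₂) ⊗≫
        𝟙 (E.obj (A₁ ⊗ A₂) ⊗ (B₁ ⊗ B₂))) := by
  intro A₁ A₂ B₁ B₂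
  rw [hΨ, hΨ]
  generalize ψ A₁ A₂ = f
  simp only [monoidalComp]
  simp
  conv_rhs => rw [associator_inv_naturality_middle_assoc, ← comp_whiskerRight_assoc,
    BraidedCategory.braiding_naturality_right]
  simp
  trans (𝟙 (B₁ ⊗ (E.obj A₁ ⊗ (B₂ ⊗ E.obj A₂))) ⊗≫
      ((β_ B₁ (E.obj A₁)).hom ⊗ₘ (β_ B₂ (E.obj A₂)).hom) ⊗≫
      E.obj A₁ ◁ (β_ B₁ (E.obj A₂)).hom ▷ B₂ ⊗≫
      f ▷ B₁ ▷ B₂ ⊗≫ 𝟙 (E.obj (A₁ ⊗ A₂) ⊗ (B₁ ⊗ B₂)))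
  · rw [MonoidalCategory.tensorHom_def]
    monoidal
  · rw [tensorHom_def']
    monoidal
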